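/- Let G be a bipartite graph with parts A' and B, where |A'| >= n/19, every vertex of A' has degree at least d/10 in B, |B| < (d/10) · n^α with α < 1, and suppose |E(G)| >= 10. Then ISO(G) >= d · n^{1-α} / 950, i.e., G contains two edge-disjoint isomorphic subgraphs each with more than d n^{1-α}/950 edges. -/

import Mathlib

set_option maxHeartbeats 1000000

lemma aux_third {α : Type*} [DecidableEq α] (π : α ≃ α) (hfix : ∀ x, π x ≠ x)
    (D : Finset α) : ∃ S : Finset α, S ⊆ D ∧ (∀ x ∈ S, π x ∉ S) ∧ D.card ≤ 3 * S.card := by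
  induction D using Finset.strongInduction with
  | _ D ih =>
    rcases D.eq_empty_or_nonempty with rfl | ⟨e, he⟩
    · exact ⟨∅, by simp⟩
    · set T : Finset α := {e, π e, π.symm e} with hT
      have hssub : D \ T ⊂ D := by
        rw [Finset.ssubset_iff_of_subset (Finset.sdiff_subset)]
        exact ⟨e, he, by simp [hT]⟩
      obtain ⟨S', hsub, hpi, hcard⟩ := ih _ hssub
      have heS' : e ∉ S' := fun h => by simpa [hT] using hsub h
      have hpieS' : π e ∉ S' := fun h => by simpa [hT] using hsub h
      have hsymS' : π.symm e ∉ S' := fun h => by simpa [hT] using hsub h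
      refine ⟨insert e S', ?_, ?_, ?_⟩
      · intro x hx
        rcases Finset.mem_insert.mp hx with rfl | hx
        · exact he
        · exact (Finset.mem_sdiff.mp (hsub hx)).1
      · intro x hx hmem
        rcases Finset.mem_insert.mp hx with rfl | hx
        · rcases Finset.mem_insert.mp hmem with h | h
          · exact hfix x h
          · exact hpieS' h
        · rcases Finset.mem_insert.mp hmem with h | h
          · exact hsymS' (by simpa [← h] using hx)
          · exact hpi x hx h
      · have h1 : D.card ≤ (D \ T).card + T.card := by
          have : D ⊆ (D \ T) ∪ T := by
            intro x hx
            by_cases hxT : x ∈ T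
            · exact Finset.mem_union_right _ hxT
            · exact Finset.mem_union_left _ (Finset.mem_sdiff.mpr ⟨hx, hxT⟩)
          calc D.card ≤ ((D \ T) ∪ T).card := Finset.card_le_card this
            _ ≤ _ := Finset.card_union_le _ _
        have h2 : T.card ≤ 3 := by
          exact Finset.card_le_three
        have h3 : (insert e S').card = S'.card + 1 := Finset.card_insert_of_notMem heS'
        omega



/-- Let `G` be bipartite with disjoint parts `A'` and `B`, where every vertex of `A'` has
degree at least `d/10 ≥ 1`, `|A'| > n/19`, `|B| < d n^α / 10` with `α < 1`, and
`(d/10)|A'| ≥ 10`.  Then `ISO(G) ≥ d n^{1-α} / 950`: there are two edge-disjoint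
isomorphic subgraphs each with at least `d n^{1-α}/950` edges. -/
theorem stmt_17 {V : Type*} [Fintype V] [DecidableEq V] (G : SimpleGraph V)
    [DecidableRel G.Adj] (A B : Finset V) (hAB : Disjoint A B)
    (hbip : ∀ u v, G.Adj u v → (u ∈ A ∧ v ∈ B) ∨ (u ∈ B ∧ v ∈ A))
    (n d α : ℝ) (hn : 0 < n) (hd : 0 < d) (hα : α < 1)
    (hdeg : ∀ a ∈ A, d / 10 ≤ (G.degree a : ℝ))
    (hd10 : 1 ≤ d / 10)
    (hA : n / 19 < (A.card : ℝ))
    (hB : (B.card : ℝ) < d * n ^ α / 10)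
    (hm : 10 ≤ d / 10 * (A.card : ℝ)) :
    ∃ H₁ H₂ : SimpleGraph V, H₁ ≤ G ∧ H₂ ≤ G ∧
      Disjoint H₁.edgeSet H₂.edgeSet ∧ Nonempty (H₁ ≃g H₂) ∧
      d * n ^ (1 - α) / 950 ≤ (H₁.edgeSet.ncard : ℝ) ∧
      d * n ^ (1 - α) / 950 ≤ (H₂.edgeSet.ncard : ℝ) := by
  classical
  set k := A.card with hk
  set l := B.card with hl
  have hk0 : k ≠ 0 := by
    intro h
    rw [h] at hm
    norm_num at hm
  -- A nonempty
  obtain ⟨a0, ha0⟩ := Finset.card_pos.mp (Nat.pos_of_ne_zero hk0)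
  have hl0 : l ≠ 0 := by
    intro h
    have hBemp : B = ∅ := Finset.card_eq_zero.mp h
    have hdega := hdeg a0 ha0
    have : 0 < G.degree a0 := by
      have : (0:ℝ) < (G.degree a0 : ℝ) := lt_of_lt_of_le (by linarith) hdega
      exact_mod_cast this
    obtain ⟨b, hb⟩ := Finset.card_pos.mp this
    have hadj : G.Adj a0 b := (SimpleGraph.mem_neighborFinset _ _ _).mp hb
    rcases hbip _ _ hadj with ⟨_, hbB⟩ | ⟨haB, _⟩
    · simp [hBemp] at hbB
    · exact (Finset.disjoint_left.mp hAB ha0) haB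
  haveI : NeZero k := ⟨hk0⟩
  haveI : NeZero l := ⟨hl0⟩
  -- coordinates
  let fA : ZMod k ≃ {x : V // x ∈ A} := (Fintype.equivFinOfCardEq (ZMod.card k)).trans A.equivFin.symm
  let fB : ZMod l ≃ {x : V // x ∈ B} := (Fintype.equivFinOfCardEq (ZMod.card l)).trans B.equivFin.symm
  let g : ZMod k → V := fun i => (fA i : V)
  let h : ZMod l → V := fun j => (fB j : V)
  have hgA : ∀ i, g i ∈ A := fun i => (fA i).2
  have hhB : ∀ j, h j ∈ B := fun j => (fB j).2
  have hginj : Function.Injective g := fun i i' hii =>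
    fA.injective (Subtype.ext hii)
  have hhinj : Function.Injective h := fun j j' hjj =>
    fB.injective (Subtype.ext hjj)
  have hgh : ∀ i j, g i ≠ h j := fun i j hij =>
    (Finset.disjoint_left.mp hAB (hgA i)) (hij ▸ hhB j)
  have hgsurj : ∀ u ∈ A, ∃ i, g i = u := fun u hu => ⟨fA.symm ⟨u, hu⟩, by simp [g]⟩
  have hhsurj : ∀ u ∈ B, ∃ j, h j = u := fun u hu => ⟨fB.symm ⟨u, hu⟩, by simp [h]⟩

  -- edge coordinates
  set Q : Finset (ZMod k × ZMod l) :=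
    Finset.univ.filter (fun q => G.Adj (g q.1) (h q.2)) with hQ
  set m := Q.card with hmdef
  -- m >= (d/10) * k
  have hdegcount : ∀ i : ZMod k,
      (G.degree (g i) : ℝ) ≤ ((Finset.univ.filter (fun j => G.Adj (g i) (h j))).card : ℝ) := by
    intro i
    have heq : (Finset.univ.filter (fun j => G.Adj (g i) (h j))).card
        = (G.neighborFinset (g i)).card := by
      apply Finset.card_bij (fun j _ => h j)
      · intro j hj
        rw [SimpleGraph.mem_neighborFinset]
        exact (Finset.mem_filter.mp hj).2
      · intro j₁ _ j₂ _ hj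
        exact hhinj hj
      · intro b hb
        have hadj : G.Adj (g i) b := (SimpleGraph.mem_neighborFinset _ _ _).mp hb
        have hbB : b ∈ B := by
          rcases hbip _ _ hadj with ⟨_, h1⟩ | ⟨h1, _⟩
          · exact h1
          · exact absurd h1 (Finset.disjoint_left.mp hAB (hgA i))
        obtain ⟨j, hj⟩ := hhsurj b hbB
        exact ⟨j, Finset.mem_filter.mpr ⟨Finset.mem_univ _, hj ▸ hadj⟩, hj⟩
    rw [heq, SimpleGraph.card_neighborFinset_eq_degree]
  have hQcard : m = ∑ i : ZMod k, (Finset.univ.filter (fun j => G.Adj (g i) (h j))).card := by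
    rw [hmdef, Finset.card_eq_sum_card_fiberwise (f := Prod.fst) (t := Finset.univ)
      (fun x _ => Finset.mem_univ _)]
    apply Finset.sum_congr rfl
    intro i _
    apply Finset.card_bij (fun q _ => q.2)
    · intro q hq
      simp only [Finset.mem_filter, Finset.mem_univ, true_and] at hq ⊢
      obtain ⟨hq1, hq2⟩ := hq
      rw [← hq2]
      exact (Finset.mem_filter.mp hq1).2
    · intro q₁ hq₁ q₂ hq₂ hq
      have h1 := (Finset.mem_filter.mp hq₁).2
      have h2 := (Finset.mem_filter.mp hq₂).2
      exact Prod.ext (h1.trans h2.symm) hq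
    · intro j hj
      refine ⟨(i, j), Finset.mem_filter.mpr ⟨?_, rfl⟩, rfl⟩
      exact Finset.mem_filter.mpr ⟨Finset.mem_univ _, (Finset.mem_filter.mp hj).2⟩
  have hMlow : d / 10 * (k : ℝ) ≤ (m : ℝ) := by
    rw [hQcard]
    push_cast
    calc d / 10 * (k : ℝ) = ∑ _i : ZMod k, d / 10 := by
          rw [Finset.sum_const, Finset.card_univ, ZMod.card, nsmul_eq_mul, mul_comm]
      _ ≤ ∑ i : ZMod k, ((Finset.univ.filter (fun j => G.Adj (g i) (h j))).card : ℝ) := by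
          apply Finset.sum_le_sum
          intro i _
          exact le_trans (hdeg (g i) (hgA i)) (hdegcount i)
  have hM10 : (10 : ℝ) ≤ (m : ℝ) := le_trans hm hMlow
  have hm10 : 10 ≤ m := by exact_mod_cast hM10
  have hMhigh : m ≤ k * l := by
    calc m ≤ (Finset.univ : Finset (ZMod k × ZMod l)).card := Finset.card_filter_le _ _
      _ = k * l := by simp [ZMod.card]

  -- shifted edge sets
  set Dp : ZMod k × ZMod l → Finset (ZMod k × ZMod l) :=
    fun p => Q.filter (fun q => (p.1 + q.1, p.2 + q.2) ∈ Q) with hDp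
  have hsum : ∑ p : ZMod k × ZMod l, (Dp p).card = m * m := by
    have key : ∀ q ∈ Q,
        (Finset.univ.filter (fun p : ZMod k × ZMod l => (p.1 + q.1, p.2 + q.2) ∈ Q)).card = m := by
      intro q _
      rw [hmdef]
      apply Finset.card_bij (fun p _ => (p.1 + q.1, p.2 + q.2))
      · intro p hp
        exact (Finset.mem_filter.mp hp).2
      · intro p₁ _ p₂ _ hp
        have h1 : p₁.1 + q.1 = p₂.1 + q.1 := congrArg Prod.fst hp
        have h2 : p₁.2 + q.2 = p₂.2 + q.2 := congrArg Prod.snd hp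
        exact Prod.ext (add_right_cancel h1) (add_right_cancel h2)
      · intro r hr
        refine ⟨(r.1 - q.1, r.2 - q.2), Finset.mem_filter.mpr ⟨Finset.mem_univ _, ?_⟩, ?_⟩
        · simpa using hr
        · simp
    calc ∑ p : ZMod k × ZMod l, (Dp p).card
        = ∑ p : ZMod k × ZMod l, ∑ q ∈ Q, (if (p.1 + q.1, p.2 + q.2) ∈ Q then 1 else 0) := by
          apply Finset.sum_congr rfl
          intro p _
          rw [hDp, Finset.card_filter]
      _ = ∑ q ∈ Q, ∑ p : ZMod k × ZMod l, (if (p.1 + q.1, p.2 + q.2) ∈ Q then 1 else 0) :=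
          Finset.sum_comm
      _ = ∑ q ∈ Q, (Finset.univ.filter (fun p : ZMod k × ZMod l => (p.1 + q.1, p.2 + q.2) ∈ Q)).card := by
          apply Finset.sum_congr rfl
          intro q _
          rw [Finset.card_filter]
      _ = ∑ q ∈ Q, m := Finset.sum_congr rfl key
      _ = m * m := by rw [Finset.sum_const, hmdef, smul_eq_mul]
  have hD0 : Dp (0, 0) = Q := by
    rw [hDp]
    apply Finset.filter_true_of_mem
    intro q hq
    simpa using hq

  -- pigeonhole over nonzero shifts
  set T : Finset (ZMod k × ZMod l) := Finset.univ.erase (0, 0) with hT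
  have hTcard : T.card = k * l - 1 := by
    rw [hT, Finset.card_erase_of_mem (Finset.mem_univ _)]
    simp [ZMod.card]
  have hkl2 : 2 ≤ k * l := le_trans (by omega) hMhigh
  have hTne : T.Nonempty := by
    rw [← Finset.card_pos, hTcard]
    omega
  have hsumT : ∑ p ∈ T, ((Dp p).card : ℝ) = (m : ℝ) * m - m := by
    have := Finset.sum_erase_add Finset.univ (fun p => ((Dp p).card : ℝ)) (Finset.mem_univ ((0:ZMod k), (0:ZMod l)))
    have hcast : ∑ p : ZMod k × ZMod l, ((Dp p).card : ℝ) = (m : ℝ) * m := by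
      rw [← Nat.cast_sum]
      exact_mod_cast congrArg (Nat.cast : ℕ → ℝ) hsum
    have hf0 : ((Dp ((0:ZMod k), (0:ZMod l))).card : ℝ) = (m : ℝ) := by
      rw [hD0, ← hmdef]
    rw [hT]
    simp only [hf0] at this
    linarith [this, hcast]
  have hKL1 : (0 : ℝ) < (k : ℝ) * l - 1 := by
    have : (2 : ℝ) ≤ (k : ℝ) * l := by exact_mod_cast hkl2
    linarith
  obtain ⟨p, hpT, hpbound⟩ : ∃ p ∈ T, ((m:ℝ) * m - m) / ((k:ℝ) * l - 1) ≤ ((Dp p).card : ℝ) := by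
    apply Finset.exists_le_of_sum_le hTne
    rw [Finset.sum_const, hTcard, hsumT]
    rw [nsmul_eq_mul]
    rw [div_eq_inv_mul, ← mul_assoc]
    have hcast2 : ((k * l - 1 : ℕ) : ℝ) = (k:ℝ) * l - 1 := by
      push_cast [Nat.cast_sub (by omega : 1 ≤ k * l)]
      ring
    rw [hcast2, mul_inv_cancel₀ (ne_of_gt hKL1), one_mul]
  have hpne : p ≠ (0, 0) := (Finset.mem_erase.mp hpT).1

  -- the shift permutation on coordinates
  set pi : (ZMod k × ZMod l) ≃ (ZMod k × ZMod l) :=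
    Equiv.prodCongr (Equiv.addLeft p.1) (Equiv.addLeft p.2) with hpi
  have hpiapp : ∀ q, pi q = (p.1 + q.1, p.2 + q.2) := fun q => rfl
  have hfix : ∀ q, pi q ≠ q := by
    intro q hq
    rw [hpiapp] at hq
    apply hpne
    have h1 : p.1 + q.1 = q.1 := congrArg Prod.fst hq
    have h2 : p.2 + q.2 = q.2 := congrArg Prod.snd hq
    have : p.1 = 0 := by
      have := add_right_cancel (h1.trans (zero_add q.1).symm)
      exact this
    have : p.2 = 0 := by
      have := add_right_cancel (h2.trans (zero_add q.2).symm)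
      exact this
    exact Prod.ext ‹p.1 = 0› ‹p.2 = 0›
  obtain ⟨S, hSsub, hSpi, hScard⟩ := aux_third pi hfix (Dp p)
  have hSQ : ∀ q ∈ S, q ∈ Q := fun q hq => Finset.mem_filter.mp (hSsub hq) |>.1
  have hSQ2 : ∀ q ∈ S, ((p.1 + q.1, p.2 + q.2) : ZMod k × ZMod l) ∈ Q :=
    fun q hq => Finset.mem_filter.mp (hSsub hq) |>.2
  -- edge encodings
  set enc : (ZMod k × ZMod l) → Sym2 V := fun q => s(g q.1, h q.2) with henc
  have henc_inj : Function.Injective enc := by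
    intro q q' hqq
    rw [henc] at hqq
    simp only [Sym2.eq_iff] at hqq
    rcases hqq with ⟨h1, h2⟩ | ⟨h1, h2⟩
    · exact Prod.ext (hginj h1) (hhinj h2)
    · exact absurd h1 (hgh _ _)
  set E₁ : Finset (Sym2 V) := S.image enc with hE₁
  set E₂ : Finset (Sym2 V) := S.image (fun q => enc (pi q)) with hE₂
  set H₁ : SimpleGraph V := SimpleGraph.fromEdgeSet ↑E₁ with hH₁
  set H₂ : SimpleGraph V := SimpleGraph.fromEdgeSet ↑E₂ with hH₂
  have hnd : ∀ q : ZMod k × ZMod l, ¬ (enc q).IsDiag := by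
    intro q hq
    rw [henc] at hq
    exact hgh _ _ (Sym2.mk_isDiag_iff.mp hq)
  have hes₁ : H₁.edgeSet = ↑E₁ := by
    rw [hH₁, SimpleGraph.edgeSet_fromEdgeSet]
    apply sdiff_eq_self_iff_disjoint.mpr
    rw [Set.disjoint_left]
    intro e hdiag heE
    obtain ⟨q, _, rfl⟩ := Finset.mem_image.mp heE
    exact absurd hdiag (hnd q)
  have hes₂ : H₂.edgeSet = ↑E₂ := by
    rw [hH₂, SimpleGraph.edgeSet_fromEdgeSet]
    apply sdiff_eq_self_iff_disjoint.mpr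
    rw [Set.disjoint_left]
    intro e hdiag heE
    obtain ⟨q, _, rfl⟩ := Finset.mem_image.mp heE
    exact absurd hdiag (hnd (pi q))
  have hcard₁ : H₁.edgeSet.ncard = S.card := by
    rw [hes₁, Set.ncard_coe_finset, hE₁, Finset.card_image_of_injective _ henc_inj]
  have hcard₂ : H₂.edgeSet.ncard = S.card := by
    rw [hes₂, Set.ncard_coe_finset, hE₂]
    exact Finset.card_image_of_injOn (fun q _ q' _ hq => pi.injective (henc_inj hq))

  -- subgraph relations
  have hle₁ : H₁ ≤ G := by
    intro u v huv
    rw [hH₁, SimpleGraph.fromEdgeSet_adj] at huv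
    obtain ⟨hmem, hne⟩ := huv
    obtain ⟨q, hqS, hq⟩ := Finset.mem_image.mp (Finset.mem_coe.mp hmem)
    have hadj : G.Adj (g q.1) (h q.2) := (Finset.mem_filter.mp (hSQ q hqS)).2
    rw [henc] at hq
    rcases Sym2.eq_iff.mp hq with ⟨h1, h2⟩ | ⟨h1, h2⟩
    · rw [← h1, ← h2]; exact hadj
    · rw [← h1, ← h2]; exact hadj.symm
  have hle₂ : H₂ ≤ G := by
    intro u v huv
    rw [hH₂, SimpleGraph.fromEdgeSet_adj] at huv
    obtain ⟨hmem, hne⟩ := huv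
    obtain ⟨q, hqS, hq⟩ := Finset.mem_image.mp (Finset.mem_coe.mp hmem)
    have hadj : G.Adj (g (p.1 + q.1)) (h (p.2 + q.2)) :=
      (Finset.mem_filter.mp (hSQ2 q hqS)).2
    rw [hpiapp, henc] at hq
    rcases Sym2.eq_iff.mp hq with ⟨h1, h2⟩ | ⟨h1, h2⟩
    · rw [← h1, ← h2]; exact hadj
    · rw [← h1, ← h2]; exact hadj.symm
  -- edge-disjointness
  have hdisj : Disjoint H₁.edgeSet H₂.edgeSet := by
    rw [hes₁, hes₂]
    rw [Finset.disjoint_coe]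
    rw [Finset.disjoint_left]
    intro e he₁ he₂
    obtain ⟨q, hqS, hq⟩ := Finset.mem_image.mp he₁
    obtain ⟨q', hq'S, hq'⟩ := Finset.mem_image.mp he₂
    have : q = pi q' := henc_inj (hq.trans hq'.symm)
    exact hSpi q' hq'S (this ▸ hqS)

  -- the vertex permutation
  set pA : Equiv.Perm V := (Equiv.addLeft p.1).extendDomain fA with hpA
  set pB : Equiv.Perm V := (Equiv.addLeft p.2).extendDomain fB with hpB
  set φ : Equiv.Perm V := pA.trans pB with hφ
  have hφg : ∀ i, φ (g i) = g (p.1 + i) := by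
    intro i
    have h1 : pA (g i) = g (p.1 + i) := by
      exact (Equiv.addLeft p.1).extendDomain_apply_image fA i
    have h2 : pB (g (p.1 + i)) = g (p.1 + i) := by
      apply (Equiv.addLeft p.2).extendDomain_apply_not_subtype fB
      exact Finset.disjoint_left.mp hAB (hgA (p.1 + i))
    rw [hφ]
    simp only [Equiv.trans_apply]
    rw [h1, h2]
  have hφh : ∀ j, φ (h j) = h (p.2 + j) := by
    intro j
    have h1 : pA (h j) = h j := by
      apply (Equiv.addLeft p.1).extendDomain_apply_not_subtype fA
      exact Finset.disjoint_right.mp hAB (hhB j)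
    have h2 : pB (h j) = h (p.2 + j) := by
      exact (Equiv.addLeft p.2).extendDomain_apply_image fB j
    rw [hφ]
    simp only [Equiv.trans_apply]
    rw [h1, h2]
  -- the isomorphism
  have hiso : Nonempty (H₁ ≃g H₂) := by
    refine ⟨⟨φ, ?_⟩⟩
    intro a b
    rw [hH₁, hH₂, SimpleGraph.fromEdgeSet_adj, SimpleGraph.fromEdgeSet_adj]
    constructor
    · rintro ⟨hmem, hne⟩
      obtain ⟨q, hqS, hq⟩ := Finset.mem_image.mp (Finset.mem_coe.mp hmem)
      rw [hpiapp, henc] at hq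
      have hne' : a ≠ b := fun hab => hne (congrArg φ hab)
      refine ⟨?_, hne'⟩
      rcases Sym2.eq_iff.mp hq with ⟨h1, h2⟩ | ⟨h1, h2⟩
      · have ha : a = g q.1 := φ.injective (by rw [hφg]; exact h1.symm)
        have hb : b = h q.2 := φ.injective (by rw [hφh]; exact h2.symm)
        apply Finset.mem_coe.mpr
        apply Finset.mem_image.mpr
        exact ⟨q, hqS, by rw [henc, ha, hb]⟩
      · have ha : a = h q.2 := φ.injective (by rw [hφh]; exact h2.symm)
        have hb : b = g q.1 := φ.injective (by rw [hφg]; exact h1.symm)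
        apply Finset.mem_coe.mpr
        apply Finset.mem_image.mpr
        exact ⟨q, hqS, by rw [henc, ha, hb, Sym2.eq_swap]⟩
    · rintro ⟨hmem, hne⟩
      obtain ⟨q, hqS, hq⟩ := Finset.mem_image.mp (Finset.mem_coe.mp hmem)
      rw [henc] at hq
      refine ⟨?_, fun hab => hne (φ.injective hab)⟩
      apply Finset.mem_coe.mpr
      apply Finset.mem_image.mpr
      refine ⟨q, hqS, ?_⟩
      rw [hpiapp, henc]
      rcases Sym2.eq_iff.mp hq with ⟨h1, h2⟩ | ⟨h1, h2⟩
      · rw [← h1, ← h2, hφg, hφh]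
      · rw [← h1, ← h2, hφg, hφh, Sym2.eq_swap]

  -- final arithmetic
  have hKpos : (0:ℝ) < (k:ℝ) := Nat.cast_pos.mpr (Nat.pos_of_ne_zero hk0)
  have hLpos : (0:ℝ) < (l:ℝ) := Nat.cast_pos.mpr (Nat.pos_of_ne_zero hl0)
  have hDS : ((Dp p).card : ℝ) ≤ 3 * (S.card:ℝ) := by exact_mod_cast hScard
  have h2 : ((m:ℝ) * m - m) / ((k:ℝ)*l - 1) ≤ 3 * (S.card:ℝ) := le_trans hpbound hDS
  have h3 : (m:ℝ)*m - m ≤ 3 * (S.card:ℝ) * ((k:ℝ)*l - 1) := by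
    rw [div_le_iff₀ hKL1] at h2
    linarith [h2]
  have hSnn : (0:ℝ) ≤ (S.card:ℝ) := Nat.cast_nonneg _
  have h4 : (9/10) * ((m:ℝ)*m) ≤ 3 * (S.card:ℝ) * ((k:ℝ)*l) := by
    nlinarith [hM10, h3, hSnn, hKL1]
  have h5 : (d*(k:ℝ)/10) * (d*(k:ℝ)/10) ≤ (m:ℝ)*(m:ℝ) := by
    have hnn : (0:ℝ) ≤ d/10*(k:ℝ) := le_trans (by norm_num) hm
    nlinarith [hMlow, hnn]
  have h6 : (9/10) * ((d*(k:ℝ)/10) * (d*(k:ℝ)/10)) ≤ 3 * (S.card:ℝ) * ((k:ℝ)*l) :=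
    le_trans (by nlinarith [h5]) h4
  have h7 : (3/1000) * d^2 * (k:ℝ) ≤ (S.card:ℝ) * l := by
    have h3k : (0:ℝ) < 3 * (k:ℝ) := by linarith
    apply le_of_mul_le_mul_right _ h3k
    calc (3/1000) * d^2 * (k:ℝ) * (3*(k:ℝ)) = (9/10) * ((d*(k:ℝ)/10) * (d*(k:ℝ)/10)) := by ring
      _ ≤ 3 * (S.card:ℝ) * ((k:ℝ)*l) := h6
      _ = (S.card:ℝ) * l * (3*(k:ℝ)) := by ring
  have hapos : (0:ℝ) < n ^ α := Real.rpow_pos_of_pos hn α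
  have hba : n ^ (1-α) * n ^ α = n := by
    rw [← Real.rpow_add hn]
    norm_num
  have h8 : (3/1000) * d^2 * (n/19) ≤ (S.card:ℝ) * (d * n^α / 10) := by
    calc (3/1000)*d^2*(n/19) ≤ (3/1000)*d^2*(k:ℝ) := by nlinarith [hA, sq_nonneg d, hd]
      _ ≤ (S.card:ℝ) * l := h7
      _ ≤ (S.card:ℝ) * (d*n^α/10) := by nlinarith [hB, hSnn]
  have h9 : (3/1900) * d * n ≤ (S.card:ℝ) * n^α := by
    have hd10' : (0:ℝ) < d/10 := by linarith
    apply le_of_mul_le_mul_right _ hd10'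
    calc (3/1900) * d * n * (d/10) = (3/1000) * d^2 * (n/19) := by ring
      _ ≤ (S.card:ℝ) * (d * n^α / 10) := h8
      _ = (S.card:ℝ) * n^α * (d/10) := by ring
  have h10 : d * n / 950 ≤ (S.card:ℝ) * n^α := by
    have : (0:ℝ) ≤ d * n := by positivity
    linarith [h9]
  have hfinal : d * n ^ (1-α) / 950 ≤ (S.card : ℝ) := by
    apply le_of_mul_le_mul_right _ hapos
    calc d * n^(1-α) / 950 * n^α = d * (n^(1-α) * n^α) / 950 := by ring
      _ = d * n / 950 := by rw [hba]
      _ ≤ (S.card:ℝ) * n^α := h10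
  exact ⟨H₁, H₂, hle₁, hle₂, hdisj, hiso, by rw [hcard₁]; exact hfinal, by rw [hcard₂]; exact hfinal⟩
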